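/- For all complex z not on the negative real axis (−∞,0) and all α ∈ (0,1), one has z^α = (sin(απ)/(απ)) ∫₀^∞ z/(y^{1/α}+z) dy. -/

import Mathlib

open MeasureTheory Set Complex Real Filter Metric


noncomputable section


lemma aux_lb {z : ℂ} (hz : z ∈ Complex.slitPlane) :
    ∃ ε > 0, ∀ x : ℝ, 0 ≤ x → ε * (1 + x) ≤ ‖(x : ℂ) + z‖ := by
  have hz0 : z ≠ 0 := Complex.slitPlane_ne_zero hz
  obtain ⟨d, hd, hdle⟩ : ∃ d > 0, ∀ x : ℝ, 0 ≤ x → d ≤ ‖(x : ℂ) + z‖ := by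
    rcases hz with hre | him
    · refine ⟨‖z‖, norm_pos_iff.mpr hz0, fun x hx => ?_⟩
      have h2 : ‖z‖ ^ 2 ≤ ‖(x:ℂ) + z‖ ^ 2 := by
        rw [Complex.sq_norm, Complex.sq_norm, Complex.normSq_apply, Complex.normSq_apply]
        simp only [Complex.add_re, Complex.add_im, Complex.ofReal_re, Complex.ofReal_im]
        nlinarith
      nlinarith [norm_nonneg ((x:ℂ)+z), norm_nonneg z, h2]
    · refine ⟨|z.im|, abs_pos.mpr him, fun x hx => ?_⟩
      have := Complex.abs_im_le_norm ((x:ℂ) + z)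
      simpa using this
  set M := ‖z‖ with hM
  have hM0 : 0 ≤ M := norm_nonneg z
  refine ⟨min d 1 / (2 + 2 * M), by positivity, fun x hx => ?_⟩
  rw [div_mul_eq_mul_div, div_le_iff₀ (by positivity)]
  rcases le_or_gt x (1 + 2 * M) with hcase | hcase
  · have h1 : min d 1 * (1 + x) ≤ d * (2 + 2 * M) := by
      have := min_le_left d 1
      have := min_le_right d 1
      nlinarith
    exact h1.trans (by nlinarith [hdle x hx])
  · have habs : x - M ≤ ‖(x:ℂ) + z‖ := by
      have h := norm_add_le ((x:ℂ)+z) (-z)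
      simp only [add_neg_cancel_right] at h
      rw [Complex.norm_real, Real.norm_eq_abs, _root_.abs_of_nonneg hx, norm_neg] at h
      linarith
    have h1 : min d 1 * (1 + x) ≤ (x - M) * (2 + 2 * M) := by
      have h2 : min d 1 ≤ 1 := min_le_right d 1
      have h3 : 0 < min d 1 := lt_min hd one_pos
      nlinarith
    exact h1.trans (by nlinarith)

lemma aux_dom {a : ℝ} (ha : -1 < a) (ha' : a < 0) :
    IntegrableOn (fun x : ℝ => x ^ a * (1 + x)⁻¹) (Ioi 0) := by
  have hcont : ContinuousOn (fun x : ℝ => x ^ a * (1 + x)⁻¹) (Ioi 0) := by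
    apply ContinuousOn.mul
    · exact fun x hx => (Real.continuousAt_rpow_const x a (Or.inl (ne_of_gt hx))).continuousWithinAt
    · exact ContinuousOn.inv₀ (by fun_prop) (fun x hx => by simp at hx; positivity)
  have h1 : IntegrableOn (fun x : ℝ => x ^ a * (1 + x)⁻¹) (Ioc 0 1) := by
    have hi : IntegrableOn (fun x : ℝ => x ^ a) (Ioc 0 1) := by
      have := intervalIntegral.intervalIntegrable_rpow' (a := (0:ℝ)) (b := 1) ha
      rwa [intervalIntegrable_iff_integrableOn_Ioc_of_le zero_le_one] at this
    refine Integrable.mono hi (hcont.mono Ioc_subset_Ioi_self |>.aestronglyMeasurable measurableSet_Ioc) ?_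
    filter_upwards [ae_restrict_mem measurableSet_Ioc] with x hx
    have hx0 : 0 < x := hx.1
    rw [Real.norm_eq_abs, Real.norm_eq_abs, _root_.abs_of_nonneg (by positivity), _root_.abs_of_nonneg (Real.rpow_nonneg hx0.le a)]
    have : (1 + x)⁻¹ ≤ 1 := by rw [inv_le_one_iff₀]; right; linarith
    nlinarith [Real.rpow_nonneg hx0.le a]
  have h2 : IntegrableOn (fun x : ℝ => x ^ a * (1 + x)⁻¹) (Ioi 1) := by
    have hi : IntegrableOn (fun x : ℝ => x ^ (a - 1)) (Ioi 1) :=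
      integrableOn_Ioi_rpow_of_lt (by linarith) one_pos
    refine Integrable.mono hi (hcont.mono (Ioi_subset_Ioi zero_le_one) |>.aestronglyMeasurable measurableSet_Ioi) ?_
    filter_upwards [ae_restrict_mem measurableSet_Ioi] with x hx
    have hx1 : (1:ℝ) < x := hx
    have hx0 : (0:ℝ) < x := by linarith
    rw [Real.norm_eq_abs, Real.norm_eq_abs, _root_.abs_of_nonneg (by positivity),
      _root_.abs_of_nonneg (Real.rpow_nonneg hx0.le _), Real.rpow_sub hx0, Real.rpow_one]
    rw [div_eq_mul_inv]
    gcongr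
    linarith
  have : Ioi (0:ℝ) = Ioc 0 1 ∪ Ioi 1 := (Ioc_union_Ioi_eq_Ioi zero_le_one).symm
  rw [this]
  exact h1.union h2

def FF (a : ℝ) (z : ℂ) : ℂ := ∫ x in Ioi (0:ℝ), ((x ^ a : ℝ) : ℂ) / ((x : ℂ) + z)

lemma aux_ne {z : ℂ} (hz : z ∈ Complex.slitPlane) {x : ℝ} (hx : 0 ≤ x) : (x : ℂ) + z ≠ 0 := by
  obtain ⟨ε, hε, hlb⟩ := aux_lb hz
  intro h
  have := hlb x hx
  rw [h] at this
  simp only [norm_zero] at this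
  nlinarith

lemma aux_cont {a : ℝ} {z : ℂ} (hz : z ∈ Complex.slitPlane) :
    ContinuousOn (fun x : ℝ => ((x ^ a : ℝ) : ℂ) / ((x : ℂ) + z)) (Ioi 0) := by
  apply ContinuousOn.div
  · exact Complex.continuous_ofReal.comp_continuousOn
      (fun x hx => (Real.continuousAt_rpow_const x a (Or.inl (ne_of_gt hx))).continuousWithinAt)
  · fun_prop
  · exact fun x hx => aux_ne hz (le_of_lt hx)

lemma aux_norm {a : ℝ} {x : ℝ} (hx : 0 < x) {z : ℂ} {ε : ℝ} (hε : 0 < ε)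
    (hlb : ε * (1 + x) ≤ ‖(x : ℂ) + z‖) :
    ‖((x ^ a : ℝ) : ℂ) / ((x : ℂ) + z)‖ ≤ ε⁻¹ * (x ^ a * (1 + x)⁻¹) := by
  rw [norm_div, Complex.norm_real, Real.norm_eq_abs, _root_.abs_of_nonneg (Real.rpow_nonneg hx.le a)]
  have h1x : (0:ℝ) < 1 + x := by linarith
  have habs : (0:ℝ) < ‖(x:ℂ) + z‖ := lt_of_lt_of_le (by positivity) hlb
  have hn : ‖(x:ℂ) + z‖ = ‖(x:ℂ) + z‖ := rfl
  rw [hn, div_le_iff₀ habs]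
  calc x ^ a = ε⁻¹ * (x ^ a * (1+x)⁻¹) * (ε * (1+x)) := by
        field_simp
      _ ≤ ε⁻¹ * (x ^ a * (1+x)⁻¹) * ‖(x:ℂ) + z‖ := by
        have hnn : (0:ℝ) ≤ ε⁻¹ * (x ^ a * (1+x)⁻¹) := by positivity
        exact mul_le_mul_of_nonneg_left hlb hnn

lemma aux_integrable {a : ℝ} (ha : -1 < a) (ha' : a < 0) {z : ℂ} (hz : z ∈ Complex.slitPlane) :
    IntegrableOn (fun x : ℝ => ((x ^ a : ℝ) : ℂ) / ((x : ℂ) + z)) (Ioi 0) := by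
  obtain ⟨ε, hε, hlb⟩ := aux_lb hz
  refine Integrable.mono (((aux_dom ha ha').const_mul ε⁻¹))
    ((aux_cont hz).aestronglyMeasurable measurableSet_Ioi) ?_
  filter_upwards [ae_restrict_mem measurableSet_Ioi] with x hx
  have hx0 : (0:ℝ) < x := hx
  have h := aux_norm (a:=a) hx0 hε (hlb x hx0.le)
  refine h.trans ?_
  rw [Real.norm_eq_abs, _root_.abs_of_nonneg]
  positivity

lemma aux_cont' {a : ℝ} {z : ℂ} (hne : ∀ x : ℝ, 0 ≤ x → (x : ℂ) + z ≠ 0) :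
    ContinuousOn (fun x : ℝ => ((x ^ a : ℝ) : ℂ) / ((x : ℂ) + z) ^ 2) (Ioi 0) := by
  apply ContinuousOn.div
  · exact Complex.continuous_ofReal.comp_continuousOn
      (fun x hx => (Real.continuousAt_rpow_const x a (Or.inl (ne_of_gt hx))).continuousWithinAt)
  · fun_prop
  · exact fun x hx => pow_ne_zero 2 (hne x (le_of_lt hx))

lemma aux_deriv {a : ℝ} (ha : -1 < a) (ha' : a < 0) {z : ℂ} (hz : z ∈ Complex.slitPlane) :
    DifferentiableAt ℂ (FF a) z := by
  obtain ⟨ε, hε, hlb⟩ := aux_lb hz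
  set r := ε / 2 with hr
  have hr0 : 0 < r := by positivity
  have hball : ∀ z' ∈ ball z r, ∀ x : ℝ, 0 ≤ x → r * (1 + x) ≤ ‖(x : ℂ) + z'‖ := by
    intro z' hz' x hx
    have h1 := hlb x hx
    have h2 : ‖z - z'‖ < r := by
      rw [← Complex.dist_eq, dist_comm]; exact hz'
    have h3 := norm_add_le ((x : ℂ) + z') (z - z')
    have h4 : (x:ℂ) + z' + (z - z') = (x:ℂ) + z := by ring
    rw [h4] at h3
    have hx1 : (1:ℝ) ≤ 1 + x := by linarith
    nlinarith
  have hne : ∀ z' ∈ ball z r, ∀ x : ℝ, 0 ≤ x → (x : ℂ) + z' ≠ 0 := by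
    intro z' hz' x hx h
    have := hball z' hz' x hx
    rw [h] at this; simp only [norm_zero] at this; nlinarith
  set F' : ℂ → ℝ → ℂ := fun z' x => -(((x ^ a : ℝ) : ℂ) / ((x : ℂ) + z') ^ 2) with hF'
  have key := hasDerivAt_integral_of_dominated_loc_of_deriv_le (F := fun z' x =>
      ((x ^ a : ℝ) : ℂ) / ((x : ℂ) + z')) (F' := F') (x₀ := z)
      (μ := volume.restrict (Ioi 0)) (bound := fun x => r⁻¹ * r⁻¹ * (x ^ a * (1 + x)⁻¹)) (ball_mem_nhds z hr0)
      ?_ ?_ ?_ ?_ ?_ ?_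
  · exact key.2.differentiableAt
  · -- measurability of F z' for z' near z
    filter_upwards [ball_mem_nhds z hr0] with z' hz'
    refine ContinuousOn.aestronglyMeasurable ?_ measurableSet_Ioi
    apply ContinuousOn.div
    · exact Complex.continuous_ofReal.comp_continuousOn
        (fun x hx => (Real.continuousAt_rpow_const x a (Or.inl (ne_of_gt hx))).continuousWithinAt)
    · fun_prop
    · exact fun x hx => hne z' hz' x (le_of_lt hx)
  · exact aux_integrable ha ha' hz
  · refine ((aux_cont' (fun x hx => hne z (mem_ball_self hr0) x hx)).neg).aestronglyMeasurable measurableSet_Ioi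
  · -- bound
    filter_upwards [ae_restrict_mem measurableSet_Ioi] with x hx z' hz'
    have hx0 : (0:ℝ) < x := hx
    have hlb' := hball z' hz' x hx0.le
    have habs : (0:ℝ) < ‖(x:ℂ) + z'‖ := lt_of_lt_of_le (by positivity) hlb'
    rw [hF']
    simp only [norm_neg, norm_div, Complex.norm_real, Real.norm_eq_abs, norm_pow,
      _root_.abs_of_nonneg (Real.rpow_nonneg hx0.le a)]
    have hn : ‖(x:ℂ) + z'‖ = ‖(x:ℂ) + z'‖ := rfl
    rw [hn, div_le_iff₀ (by positivity)]
    have h1x : (0:ℝ) < 1 + x := by linarith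
    have step : (r * (1+x))^2 ≤ ‖(x:ℂ) + z'‖ ^ 2 := by
      apply sq_le_sq' _ hlb'
      nlinarith
    have e1 : (r⁻¹ * r⁻¹ * (x ^ a * (1+x)⁻¹)) * (r * (1+x))^2 = x ^ a * (1+x) := by
      field_simp
    calc x ^ a ≤ x ^ a * (1+x) := by nlinarith [Real.rpow_nonneg hx0.le a]
        _ = (r⁻¹ * r⁻¹ * (x ^ a * (1+x)⁻¹)) * (r * (1+x))^2 := e1.symm
        _ ≤ (r⁻¹ * r⁻¹ * (x ^ a * (1+x)⁻¹)) * (‖(x:ℂ) + z'‖ ^ 2) :=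
          mul_le_mul_of_nonneg_left step (by positivity)
  · exact (aux_dom ha ha').const_mul _
  · -- differentiability in z'
    filter_upwards [ae_restrict_mem measurableSet_Ioi] with x hx z' hz'
    have hx0 : (0:ℝ) < x := hx
    have hzne := hne z' hz' x hx0.le
    have h1 : HasDerivAt (fun w : ℂ => (x:ℂ) + w) 1 z' := by
      simpa using (hasDerivAt_id z').const_add (x:ℂ)
    have h2 := (h1.inv hzne).const_mul (((x ^ a : ℝ) : ℂ))
    have h3 : (fun w : ℂ => ((x ^ a : ℝ) : ℂ) * ((x:ℂ) + w)⁻¹)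
        = fun w : ℂ => ((x ^ a : ℝ) : ℂ) / ((x:ℂ) + w) := by
      funext w; rw [div_eq_mul_inv]
    simp only [Pi.inv_apply] at h2; rw [h3] at h2
    refine h2.congr_deriv ?_
    rw [hF']
    field_simp

lemma aux_preconnected : IsPreconnected Complex.slitPlane := by
  have hpath : IsPathConnected Complex.slitPlane := by
    refine ⟨1, Complex.one_mem_slitPlane, fun {y} hy => ?_⟩
    refine JoinedIn.ofLine (AffineMap.lineMap_continuous (R := ℝ)).continuousOn
      (AffineMap.lineMap_apply_zero _ _) (AffineMap.lineMap_apply_one _ _) ?_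
    rw [← segment_eq_image_lineMap]
    exact Complex.starConvex_one_slitPlane.segment_subset hy
  exact hpath.isConnected.isPreconnected

lemma aux_beta {α : ℝ} (hα : α ∈ Set.Ioo (0:ℝ) 1) :
    FF (α - 1) 1 = (Real.pi : ℂ) / Complex.sin (Real.pi * α) := by
  obtain ⟨hα0, hα1⟩ := hα
  set f : ℝ → ℝ := fun u => u / (1 - u) with hf
  have himg : f '' Ioo 0 1 = Ioi 0 := by
    ext t
    constructor
    · rintro ⟨u, ⟨hu0, hu1⟩, rfl⟩
      exact div_pos hu0 (by linarith)
    · intro ht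
      have ht0 : (0:ℝ) < t := ht
      refine ⟨t / (1 + t), ⟨by positivity, by rw [div_lt_one (by linarith)]; linarith⟩, ?_⟩
      show t / (1 + t) / (1 - t / (1 + t)) = t
      have h1 : 1 - t / (1 + t) = 1 / (1 + t) := by field_simp; ring
      rw [h1]
      field_simp
  have hderiv : ∀ u ∈ Ioo (0:ℝ) 1, HasDerivWithinAt f (((1 - u) ^ 2)⁻¹) (Ioo 0 1) u := by
    intro u hu
    have h1u : (0:ℝ) < 1 - u := by linarith [hu.2]
    have h := (hasDerivAt_id u).div ((hasDerivAt_const u (1:ℝ)).sub (hasDerivAt_id u)) h1u.ne'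
    refine (show HasDerivAt f _ u from h).hasDerivWithinAt.congr_deriv ?_
    simp only [Pi.sub_apply, id]; rw [inv_eq_one_div]; congr 1; ring
  have hinj : InjOn f (Ioo 0 1) := by
    intro u hu v hv h
    have h1u : (0:ℝ) < 1 - u := by linarith [hu.2]
    have h1v : (0:ℝ) < 1 - v := by linarith [hv.2]
    rw [hf, div_eq_div_iff h1u.ne' h1v.ne'] at h
    nlinarith
  have hchg := integral_image_eq_integral_abs_deriv_smul measurableSet_Ioo hderiv hinj
      (fun x : ℝ => ((x ^ (α-1) : ℝ) : ℂ) / ((x : ℂ) + 1))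
  rw [himg] at hchg
  rw [FF, hchg]
  have hcongr : ∀ u ∈ Ioo (0:ℝ) 1,
      |((1 - u) ^ 2)⁻¹| • (((f u ^ (α-1) : ℝ) : ℂ) / ((f u : ℂ) + 1))
        = ((u ^ (α-1) * (1-u) ^ (-α) : ℝ) : ℂ) := by
    intro u hu
    obtain ⟨hu0, hu1⟩ := hu
    have h1u : (0:ℝ) < 1 - u := by linarith
    have hfuC : ((f u : ℝ) : ℂ) + 1 = (((1 - u)⁻¹ : ℝ) : ℂ) := by
      have hfu : f u + 1 = (1 - u)⁻¹ := by rw [hf]; field_simp; ring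
      rw [← hfu]; push_cast; ring
    rw [hfuC, _root_.abs_of_nonneg (by positivity : (0:ℝ) ≤ ((1-u)^2)⁻¹)]
    rw [Complex.real_smul]
    rw [← Complex.ofReal_div, ← Complex.ofReal_mul]
    congr 1
    have hpowpos : (0:ℝ) < (1-u) ^ α := Real.rpow_pos_of_pos h1u α
    rw [hf]
    show ((1-u)^2)⁻¹ * ((u/(1-u)) ^ (α-1) / (1-u)⁻¹) = u ^ (α-1) * (1-u) ^ (-α)
    rw [Real.div_rpow hu0.le h1u.le, Real.rpow_sub h1u, Real.rpow_one, Real.rpow_neg h1u.le]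
    field_simp
  rw [setIntegral_congr_fun measurableSet_Ioo hcongr]
  have hbeta : Complex.betaIntegral α (1 - α)
      = ∫ u in Ioo (0:ℝ) 1, ((u ^ (α-1) * (1-u) ^ (-α) : ℝ) : ℂ) := by
    rw [Complex.betaIntegral, intervalIntegral.integral_of_le zero_le_one,
      MeasureTheory.integral_Ioc_eq_integral_Ioo]
    refine setIntegral_congr_fun measurableSet_Ioo (fun u hu => ?_)
    obtain ⟨hu0, hu1⟩ := hu
    have h1u : (0:ℝ) < 1 - u := by linarith
    rw [Complex.ofReal_mul, Complex.ofReal_cpow hu0.le, Complex.ofReal_cpow h1u.le]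
    push_cast
    ring_nf
  have hval : Complex.betaIntegral α (1 - α) = (Real.pi : ℂ) / Complex.sin (Real.pi * α) := by
    have h1 : Complex.Gamma α * Complex.Gamma (1 - α)
        = Complex.Gamma ((α : ℂ) + (1 - α)) * Complex.betaIntegral α (1 - α) :=
      Complex.Gamma_mul_Gamma_eq_betaIntegral (by simpa using hα0) (by simp; simpa using hα1)
    have h2 : Complex.Gamma α * Complex.Gamma (1 - α)
        = (Real.pi : ℂ) / Complex.sin (Real.pi * α) := by
      have := Complex.Gamma_mul_Gamma_one_sub (α : ℂ)
      rw [this]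
    have h3 : ((α : ℂ) + (1 - α)) = 1 := by ring
    rw [h3, Complex.Gamma_one, one_mul] at h1
    rw [← h1, h2]
  rw [← hbeta, hval]

lemma aux_real {α : ℝ} (hα : α ∈ Set.Ioo (0:ℝ) 1) {t : ℝ} (ht : 0 < t) :
    FF (α - 1) (t : ℂ) = (Real.pi : ℂ) / Complex.sin (Real.pi * α) * (t : ℂ) ^ ((α : ℂ) - 1) := by
  obtain ⟨hα0, hα1⟩ := hα
  set a := α - 1 with ha
  have hscale := MeasureTheory.integral_comp_mul_left_Ioi
    (g := fun x : ℝ => ((x ^ a : ℝ) : ℂ) / ((x : ℂ) + (t : ℂ))) 0 ht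
  rw [mul_zero] at hscale
  beta_reduce at hscale
  have htC : (t : ℂ) ≠ 0 := by exact_mod_cast ht.ne'
  have hFF : FF a (t : ℂ) = (t : ℂ) * ∫ x in Ioi (0:ℝ), ((( (t*x) ^ a : ℝ)) : ℂ) / (((t*x : ℝ) : ℂ) + (t:ℂ)) := by
    rw [FF, hscale, ← Complex.real_smul, smul_smul, mul_inv_cancel₀ ht.ne', one_smul]
  have hcongr : ∀ x ∈ Ioi (0:ℝ),
      ((( (t*x) ^ a : ℝ)) : ℂ) / (((t*x : ℝ) : ℂ) + (t:ℂ))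
        = ((t ^ a * t⁻¹ : ℝ) : ℂ) * (((x ^ a : ℝ) : ℂ) / ((x : ℂ) + 1)) := by
    intro x hx
    have hx0 : (0:ℝ) < x := hx
    rw [Real.mul_rpow ht.le hx0.le]
    have hden : ((t*x : ℝ) : ℂ) + (t:ℂ) = (t:ℂ) * ((x:ℂ) + 1) := by push_cast; ring
    rw [hden]
    push_cast
    have hxC : ((x:ℂ) + 1) ≠ 0 := by
      intro h
      have : ((x + 1 : ℝ) : ℂ) = 0 := by push_cast; linear_combination h
      have := Complex.ofReal_eq_zero.mp this
      linarith
    field_simp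
  rw [hFF, setIntegral_congr_fun measurableSet_Ioi hcongr, MeasureTheory.integral_const_mul]
  have hbeta := aux_beta (α := α) ⟨hα0, hα1⟩
  rw [← ha] at hbeta
  have hFF1 : (∫ x in Ioi (0:ℝ), ((x ^ a : ℝ) : ℂ) / ((x : ℂ) + 1)) = FF a 1 := rfl
  rw [hFF1, hbeta]
  have hta : ((t ^ a : ℝ) : ℂ) = (t : ℂ) ^ ((α : ℂ) - 1) := by
    rw [Complex.ofReal_cpow ht.le a]
    norm_cast
  rw [← mul_assoc, ← Complex.ofReal_mul]
  have hcancel : t * (t ^ a * t⁻¹) = t ^ a := by field_simp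
  rw [hcancel, hta]
  ring

lemma aux_key {α : ℝ} (hα : α ∈ Set.Ioo (0:ℝ) 1) {z : ℂ} (hz : z ∈ Complex.slitPlane) :
    FF (α - 1) z = (Real.pi : ℂ) / Complex.sin (Real.pi * α) * z ^ ((α : ℂ) - 1) := by
  obtain ⟨hα0, hα1⟩ := hα
  have ha : -1 < α - 1 := by linarith
  have ha' : α - 1 < 0 := by linarith
  set G : ℂ → ℂ := fun w => (Real.pi : ℂ) / Complex.sin (Real.pi * α) * w ^ ((α : ℂ) - 1) with hG
  have hFan : AnalyticOnNhd ℂ (FF (α - 1)) Complex.slitPlane := by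
    have hdo : DifferentiableOn ℂ (FF (α - 1)) Complex.slitPlane :=
      fun w hw => (aux_deriv ha ha' hw).differentiableWithinAt
    exact hdo.analyticOnNhd Complex.isOpen_slitPlane
  have hGan : AnalyticOnNhd ℂ G Complex.slitPlane := by
    refine DifferentiableOn.analyticOnNhd (fun w hw => ?_) Complex.isOpen_slitPlane
    exact (((Complex.hasStrictDerivAt_cpow_const hw).hasDerivAt.differentiableAt).const_mul
      _).differentiableWithinAt
  have hfreq : ∃ᶠ w in nhdsWithin (1:ℂ) {(1:ℂ)}ᶜ, FF (α - 1) w = G w := by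
    have htend0 : Tendsto (fun n : ℕ => (1 + 1/(n+1) : ℝ)) atTop (nhds 1) := by
      have := tendsto_one_div_add_atTop_nhds_zero_nat (𝕜 := ℝ)
      have h2 := this.const_add (1:ℝ)
      simpa using h2
    have htendC : Tendsto (fun n : ℕ => ((1 + 1/(n+1) : ℝ) : ℂ)) atTop (nhds (1:ℂ)) := by
      have h := (Complex.continuous_ofReal.tendsto (1:ℝ)).comp htend0
      simpa [Function.comp_def] using h
    have htend : Tendsto (fun n : ℕ => ((1 + 1/(n+1) : ℝ) : ℂ)) atTop
        (nhdsWithin (1:ℂ) {(1:ℂ)}ᶜ) := by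
      refine tendsto_nhdsWithin_of_tendsto_nhds_of_eventually_within _ htendC ?_
      filter_upwards with n
      simp only [mem_compl_iff, mem_singleton_iff]
      intro h
      have : (1 + 1/(n+1) : ℝ) = 1 := by exact_mod_cast h
      have hpos : (0:ℝ) < 1/(n+1) := by positivity
      linarith
    refine htend.frequently (Frequently.of_forall (fun n => ?_))
    have hpos : (0:ℝ) < 1 + 1/(n+1) := by positivity
    exact aux_real ⟨hα0, hα1⟩ hpos
  exact hFan.eqOn_of_preconnected_of_frequently_eq hGan aux_preconnected
    Complex.one_mem_slitPlane hfreq hz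

end


/-- For all complex `z` not on the negative real axis and `α ∈ (0,1)`,
`z^α = (sin(απ)/(απ)) ∫₀^∞ z/(y^(1/α)+z) dy` (principal branch). -/
theorem stmt1 (α : ℝ) (hα : α ∈ Set.Ioo (0:ℝ) 1) (z : ℂ)
    (hz : ∀ x : ℝ, x < 0 → z ≠ (x : ℂ)) :
    z ^ (α : ℂ) =
      ((Real.sin (α * Real.pi) / (α * Real.pi) : ℝ) : ℂ) *
        ∫ y in Set.Ioi (0:ℝ), z / (((y ^ (1/α) : ℝ) : ℂ) + z) := by
  obtain ⟨hα0, hα1⟩ := hα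
  rcases eq_or_ne z 0 with rfl | hz0
  · have : ((α : ℂ)) ≠ 0 := by exact_mod_cast hα0.ne'
    simp [Complex.zero_cpow this]
  have hmem : z ∈ Complex.slitPlane := by
    rcases eq_or_ne z.im 0 with him | him
    · have hre : z = ((z.re : ℝ) : ℂ) := by
        apply Complex.ext <;> simp [him]
      rcases lt_trichotomy z.re 0 with h | h | h
      · exact absurd hre (hz z.re h)
      · exfalso; apply hz0; rw [hre, h]; simp
      · exact Or.inl h
    · exact Or.inr him
  -- change of variables y = x^α
  have hchg := MeasureTheory.integral_comp_rpow_Ioi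
    (fun y : ℝ => z / (((y ^ (1/α) : ℝ) : ℂ) + z)) (p := α) hα0.ne'
  rw [← hchg]
  have hcongr : ∀ x ∈ Ioi (0:ℝ),
      (|α| * x ^ (α - 1)) • (z / ((((x ^ α) ^ (1/α) : ℝ) : ℂ) + z))
        = ((α : ℂ) * z) * (((x ^ (α-1) : ℝ) : ℂ) / ((x : ℂ) + z)) := by
    intro x hx
    have hx0 : (0:ℝ) < x := hx
    have hxx : (x ^ α) ^ (1/α) = x := by
      rw [← Real.rpow_mul hx0.le, mul_one_div_cancel hα0.ne', Real.rpow_one]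
    rw [hxx, _root_.abs_of_pos hα0, Complex.real_smul]
    push_cast
    have hne : (x : ℂ) + z ≠ 0 := by
      intro h
      have h2 : z = -(x:ℂ) := by linear_combination h
      have h3 : z = ((-x : ℝ) : ℂ) := by rw [h2]; push_cast; ring
      exact hz (-x) (by linarith) h3
    field_simp
  rw [setIntegral_congr_fun measurableSet_Ioi hcongr, MeasureTheory.integral_const_mul]
  have hFF : (∫ x in Ioi (0:ℝ), ((x ^ (α-1) : ℝ) : ℂ) / ((x : ℂ) + z)) = FF (α-1) z := rfl
  rw [hFF, aux_key ⟨hα0, hα1⟩ hmem]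
  -- now pure algebra
  have hzpow : z ^ ((α : ℂ) - 1) * z = z ^ (α : ℂ) := by
    have := Complex.cpow_add ((α:ℂ) - 1) 1 hz0
    rw [Complex.cpow_one] at this
    rw [← this]; ring_nf
  have hsin : Real.sin (α * Real.pi) ≠ 0 := by
    apply ne_of_gt
    apply Real.sin_pos_of_pos_of_lt_pi
    · positivity
    · nlinarith [Real.pi_pos]
  have hsinC : Complex.sin ((Real.pi : ℂ) * (α : ℂ)) = ((Real.sin (α * Real.pi) : ℝ) : ℂ) := by
    rw [mul_comm]
    rw [← Complex.ofReal_mul, ← Complex.ofReal_sin]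
  rw [hsinC]
  have hαC : ((α : ℂ)) ≠ 0 := by exact_mod_cast hα0.ne'
  have hπC : ((Real.pi : ℝ) : ℂ) ≠ 0 := by exact_mod_cast Real.pi_ne_zero
  have hsC : ((Real.sin (α * Real.pi) : ℝ) : ℂ) ≠ 0 := by exact_mod_cast hsin
  have hsC2 : Complex.sin ((α:ℂ) * (Real.pi:ℂ)) ≠ 0 := by
    rw [← Complex.ofReal_mul, ← Complex.ofReal_sin]
    exact_mod_cast hsin
  rw [← hzpow, Complex.ofReal_div, Complex.ofReal_mul]
  field_simp
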